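/- Let μ_f be the measure on Λ_A ⊂ [0,1] given by μ_f(B) = ⟨f, E(B) f⟩ for f ∈ L²(Λ_A, μ_A) with ‖f‖ = 1, and let S_k be the Cuntz–Krieger generators acting on L²(Λ_A, μ_A). Then the Fourier transform μ̂_f(t) = ∫ e^{itx} dμ_f(x) satisfies the scaling identity μ̂_f(t) = Σ_{k=0}^{N−1} e^{itk/N} μ̂_{S_k* f}(t/N). -/

import Mathlib

open MeasureTheory Complex
open scoped BigOperators ENNReal NNReal

/-- Let `μ_f(B) = ⟨f, E(B) f⟩ = ∫_B |f|² dμ_A` for `f ∈ L²(Λ_A, μ_A)`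
of norm one, in the representation of `O_A` on `L²(Λ_A, μ_A)` (so that
`μ_{S_k* f}(B) = ∫_B N^{-δ_A} χ_{D_k} |f ∘ σ_k|² dμ_A` with `σ_k(x) = (x+k)/N`).
Then the Fourier transform `μ̂_f(t) = ∫ e^{itx} dμ_f(x)` satisfies the scaling identity
`μ̂_f(t) = Σ_{k=0}^{N-1} e^{itk/N} μ̂_{S_k* f}(t/N)`. -/
theorem fourier_scaling_identity
    {N : ℕ} (hN : 2 ≤ N) (δ : ℝ) (hδ : 0 < δ)
    (μA : Measure ℝ) [IsProbabilityMeasure μA]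
    (Λ : Set ℝ) (hΛ : Λ ⊆ Set.Icc 0 1) (hμΛ : μA Λᶜ = 0)
    (D : Fin N → Set ℝ) (hDmeas : ∀ k, MeasurableSet (D k))
    -- self-similarity of μ_A :  μ_A = N^{-δ_A} Σ_k μ_A ∘ σ_k^{-1}
    (hself : ∀ E : Set ℝ, MeasurableSet E →
      μA E = ∑ k : Fin N, ENNReal.ofReal ((N : ℝ) ^ (-δ)) *
        μA {x | x ∈ D k ∧ (x + (k : ℕ)) / (N : ℝ) ∈ E})
    (f : ℝ → ℂ) (hfmeas : Measurable f)
    (hfL2 : MemLp f 2 μA) (hfnorm : ∫ x, ‖f x‖ ^ 2 ∂μA = 1) :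
    ∀ t : ℝ,
      (∫ x, Complex.exp (Complex.I * t * x)
          ∂(μA.withDensity fun x => ENNReal.ofReal (‖f x‖ ^ 2)))
        = ∑ k : Fin N,
            Complex.exp (Complex.I * t * (k : ℕ) / (N : ℝ)) *
            ∫ x, Complex.exp (Complex.I * t * x / (N : ℝ))
              ∂(μA.withDensity fun x => ENNReal.ofReal
                  ((N : ℝ) ^ (-δ) * (D k).indicator (fun _ => (1 : ℝ)) x *
                    ‖f ((x + (k : ℕ)) / (N : ℝ))‖ ^ 2)) := by
  intro t
  have hN0 : (N : ℝ) ≠ 0 := by positivity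
  set c : ℝ := (N : ℝ) ^ (-δ) with hc
  have hcpos : 0 < c := by rw [hc]; positivity
  have hσmeas : ∀ k : Fin N, Measurable (fun x : ℝ => (x + (k : ℕ)) / (N : ℝ)) :=
    fun k => (measurable_id.add_const _).div_const _
  have hexp1 : ∀ z : ℂ, z.re = 0 → ‖Complex.exp z‖ = 1 := by
    intro z hz
    rw [Complex.norm_exp, hz, Real.exp_zero]
  have hν : μA = ∑ k : Fin N, ENNReal.ofReal c •
      Measure.map (fun x : ℝ => (x + (k : ℕ)) / (N : ℝ)) (μA.restrict (D k)) := by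
    ext E hE
    rw [hself E hE, Measure.finset_sum_apply]
    refine Finset.sum_congr rfl fun k _ => ?_
    rw [Measure.smul_apply, smul_eq_mul,
      Measure.map_apply (hσmeas k) hE, Measure.restrict_apply ((hσmeas k) hE)]
    have : (fun x : ℝ => (x + (k : ℕ)) / (N : ℝ)) ⁻¹' E ∩ D k
        = {x | x ∈ D k ∧ (x + (k : ℕ)) / (N : ℝ) ∈ E} := by
      ext x; simp [Set.mem_setOf_eq, and_comm]
    rw [this]
  set g : ℝ → ℂ := fun x => (‖f x‖ ^ 2 : ℝ) • Complex.exp (Complex.I * t * x) with hg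
  have hgmeas : Measurable g := by
    refine Measurable.smul (f := fun x => ‖f x‖ ^ 2)
      (g := fun x => Complex.exp (Complex.I * t * x)) ?_ ?_
    · exact hfmeas.norm.pow_const 2
    · exact Complex.measurable_exp.comp
        ((measurable_const.mul Complex.measurable_ofReal).comp measurable_id)
  have hsq_int : Integrable (fun x => ‖f x‖ ^ 2) μA := by
    have := hfL2.integrable_norm_rpow (by norm_num) (by norm_num)
    simpa [Real.rpow_natCast] using this
  have hg_int : Integrable g μA := by
    refine hsq_int.mono' hgmeas.aestronglyMeasurable (Filter.Eventually.of_forall fun x => ?_)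
    rw [hg, norm_smul, hexp1 _ (by simp), mul_one, Real.norm_eq_abs]
    exact (_root_.abs_of_nonneg (by positivity)).le
  have hLHS : (∫ x, Complex.exp (Complex.I * t * x)
      ∂(μA.withDensity fun x => ENNReal.ofReal (‖f x‖ ^ 2))) = ∫ x, g x ∂μA := by
    have hd : (fun x => ENNReal.ofReal (‖f x‖ ^ 2))
        = fun x => ((‖f x‖ ^ 2).toNNReal : ℝ≥0∞) := rfl
    rw [hd, integral_withDensity_eq_integral_smul (hfmeas.norm.pow_const 2).real_toNNReal]
    refine integral_congr_ae (Filter.Eventually.of_forall fun x => ?_)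
    beta_reduce
    rw [hg, NNReal.smul_def, Real.coe_toNNReal _ (by positivity)]
  rw [hLHS]
  have hRHS : ∀ k : Fin N,
      (∫ x, Complex.exp (Complex.I * t * x / (N : ℝ))
        ∂(μA.withDensity fun x => ENNReal.ofReal
            (c * (D k).indicator (fun _ => (1 : ℝ)) x * ‖f ((x + (k : ℕ)) / (N : ℝ))‖ ^ 2)))
      = ∫ x, (c * (D k).indicator (fun _ => (1 : ℝ)) x * ‖f ((x + (k : ℕ)) / (N : ℝ))‖ ^ 2) •
          Complex.exp (Complex.I * t * x / (N : ℝ)) ∂μA := by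
    intro k
    have hdmeas : Measurable fun x : ℝ =>
        Real.toNNReal (c * (D k).indicator (fun _ => (1 : ℝ)) x *
          ‖f ((x + (k : ℕ)) / (N : ℝ))‖ ^ 2) := by
      refine Measurable.real_toNNReal ?_
      exact (measurable_const.mul (measurable_const.indicator (hDmeas k))).mul
        ((hfmeas.comp (hσmeas k)).norm.pow_const 2)
    have hd : (fun x => ENNReal.ofReal
          (c * (D k).indicator (fun _ => (1 : ℝ)) x * ‖f ((x + (k : ℕ)) / (N : ℝ))‖ ^ 2))
        = fun x => (((c * (D k).indicator (fun _ => (1 : ℝ)) x *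
            ‖f ((x + (k : ℕ)) / (N : ℝ))‖ ^ 2).toNNReal : ℝ≥0∞)) := rfl
    rw [hd, integral_withDensity_eq_integral_smul hdmeas]
    refine integral_congr_ae (Filter.Eventually.of_forall fun x => ?_)
    have hind : 0 ≤ (D k).indicator (fun _ => (1 : ℝ)) x := Set.indicator_nonneg (by simp) x
    have h0 : 0 ≤ c * (D k).indicator (fun _ => (1 : ℝ)) x *
        ‖f ((x + (k : ℕ)) / (N : ℝ))‖ ^ 2 := by positivity
    beta_reduce
    rw [NNReal.smul_def, Real.coe_toNNReal _ h0]
  simp only [hRHS]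
  have hint : ∀ k : Fin N, Integrable g
      (ENNReal.ofReal c •
        Measure.map (fun x : ℝ => (x + (k : ℕ)) / (N : ℝ)) (μA.restrict (D k))) := by
    intro k
    refine hg_int.mono_measure ?_
    conv_rhs => rw [hν]
    rw [Measure.le_iff]
    intro s hs
    rw [Measure.finset_sum_apply]
    exact Finset.single_le_sum (f := fun i : Fin N => (ENNReal.ofReal c •
      Measure.map (fun x : ℝ => (x + (i : ℕ)) / (N : ℝ)) (μA.restrict (D i))) s)
      (fun i _ => zero_le) (Finset.mem_univ k)
  calc ∫ x, g x ∂μA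
      = ∑ k : Fin N, ∫ x, g x ∂(ENNReal.ofReal c •
          Measure.map (fun x : ℝ => (x + (k : ℕ)) / (N : ℝ)) (μA.restrict (D k))) := by
        rw [← integral_finset_sum_measure fun k _ => hint k, ← hν]
    _ = ∑ k : Fin N, c • ∫ x in D k, g ((x + (k : ℕ)) / (N : ℝ)) ∂μA := by
        refine Finset.sum_congr rfl fun k _ => ?_
        rw [integral_smul_measure, ENNReal.toReal_ofReal hcpos.le,
          integral_map (hσmeas k).aemeasurable hgmeas.aestronglyMeasurable]
    _ = ∑ k : Fin N, Complex.exp (Complex.I * t * (k : ℕ) / (N : ℝ)) *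
          ∫ x, (c * (D k).indicator (fun _ => (1 : ℝ)) x *
            ‖f ((x + (k : ℕ)) / (N : ℝ))‖ ^ 2) •
            Complex.exp (Complex.I * t * x / (N : ℝ)) ∂μA := by
        refine Finset.sum_congr rfl fun k _ => ?_
        rw [← integral_indicator (hDmeas k), ← integral_smul, ← integral_const_mul]
        refine integral_congr_ae (Filter.Eventually.of_forall fun x => ?_)
        beta_reduce
        by_cases hx : x ∈ D k
        · rw [Set.indicator_of_mem hx, Set.indicator_of_mem hx, hg]
          have hsplit : Complex.exp (Complex.I * t * (((x + (k : ℕ)) / (N : ℝ) : ℝ) : ℂ))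
              = Complex.exp (Complex.I * t * (k : ℕ) / (N : ℝ)) *
                Complex.exp (Complex.I * t * x / (N : ℝ)) := by
            rw [← Complex.exp_add]
            congr 1
            push_cast
            field_simp
            ring
          simp only [hsplit, smul_eq_mul, Complex.real_smul, mul_one]
          push_cast
          ring
        · rw [Set.indicator_of_notMem hx, Set.indicator_of_notMem hx]
          simp
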